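/- Let G be a binary quasigroup of order n with operation * and let k ≥ 1. If for some odd d' ≥ 1 we have Per_k(S_{d'}(G)) > 0, then Per_k(S_d(G)) > 0 for all d ≥ d'. -/

import Mathlib

/-- The left-to-right product `((a₁ * a₂) * ⋯) * a_m` of a list of elements of `Fin n`
under a binary operation `op`, where `e` is returned for the empty list
(all uses below have nonempty lists). -/
def leftProd {n : ℕ} (op : Fin n → Fin n → Fin n) (e : Fin n) : List (Fin n) → Fin n
  | [] => e
  | a :: l => l.foldl op a

/-- `SdSet op e d` is the support `S_d(G)` of the `d`-dimensional MDS code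
`M(G^[d-1])` of the `(d-1)`-iterated quasigroup `G` with operation `op`:
the set of `(x₁, …, x_d)` with `((…((x₁ * x₂) * x₃) * …) * x_d = e`,
where `e` plays the role of the fixed element `1` of `Fin n`. -/
def SdSet {n : ℕ} (op : Fin n → Fin n → Fin n) (e : Fin n) (d : ℕ) :
    Set (Fin d → Fin n) :=
  {x | leftProd op e (List.ofFn x) = e}

/-- `IsKMultiplex S k K` says that the multiset `K` is a `k`-multiplex over
`S ⊆ (Fin n)^d`: it consists of `k·n` elements of `S` and, for every coordinate `j`
and every symbol `v`, exactly `k` elements of `K` (counted with multiplicity) have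
`j`-th coordinate equal to `v`. -/
def IsKMultiplex {n d : ℕ} (S : Set (Fin d → Fin n)) (k : ℕ)
    (K : Multiset (Fin d → Fin n)) : Prop :=
  Multiset.card K = k * n ∧ (∀ x ∈ K, x ∈ S) ∧
    ∀ (j : Fin d) (v : Fin n), Multiset.card (K.filter (fun x => x j = v)) = k

/-- `Perk S k` is the number of `k`-multiplexes over `S` (the `k`-multipermanent). -/
noncomputable def Perk {n d : ℕ} (S : Set (Fin d → Fin n)) (k : ℕ) : ℕ :=
  Set.ncard {K : Multiset (Fin d → Fin n) | IsKMultiplex S k K}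

/-- `perk S k` is the number of `k`-plexes in `S` (`k`-multiplexes without repeated
elements), i.e. the `k`-permanent. -/
noncomputable def perk {n d : ℕ} (S : Set (Fin d → Fin n)) (k : ℕ) : ℕ :=
  Set.ncard {K : Multiset (Fin d → Fin n) | K.Nodup ∧ IsKMultiplex S k K}

namespace PerkAux

lemma countP_replicate {α : Type*} (p : α → Bool) (k : ℕ) (b : α) :
    (List.replicate k b).countP p = if p b then k else 0 := by
  induction k with
  | zero => simp
  | succ k ih =>
      rw [List.replicate_succ, List.countP_cons, ih]
      by_cases h : p b <;> simp [h]

lemma countP_flatMap_replicate {α β : Type*} (p : β → Bool) (k : ℕ) (g : α → β)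
    (l : List α) :
    ((l.flatMap fun t => List.replicate k (g t)).countP p)
      = (l.countP fun t => p (g t)) * k := by
  induction l with
  | nil => simp
  | cons a l ih =>
      rw [List.flatMap_cons, List.countP_append, ih, countP_replicate,
        List.countP_cons]
      by_cases h : p (g a) <;> simp [h, add_mul] <;> omega

lemma countP_flatMap_replicate_id {α : Type*} (p : α → Bool) (k : ℕ) (l : List α) :
    ((l.flatMap fun t => List.replicate k t).countP p) = (l.countP p) * k := by
  simpa using countP_flatMap_replicate p k id l

lemma countP_finRange_eq {n : ℕ} (u : Fin n) :
    ((List.finRange n).countP fun t => t = u) = 1 := by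
  have h1 : ((List.finRange n).countP fun t => t = u) = (List.finRange n).count u := by
    rw [List.count]
    apply List.countP_congr
    intro a _
    simp
  rw [h1]
  exact List.count_eq_one_of_mem (List.nodup_finRange n) (List.mem_finRange u)

section Quasigroup

variable {n : ℕ} (op : Fin n → Fin n → Fin n) (e : Fin n)
variable (hop : ∀ a : Fin n, Function.Bijective (op a) ∧ Function.Bijective (fun x => op x a))

noncomputable def rmap (a : Fin n) : Fin n :=
  (Equiv.ofBijective (op a) (hop a).1).symm e

include hop in
lemma op_rmap (a : Fin n) : op a (rmap op e hop a) = e := by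
  exact (Equiv.ofBijective (op a) (hop a).1).apply_symm_apply e

include hop in
lemma rmap_bijective : Function.Bijective (rmap op e hop) := by
  constructor
  · intro a b h
    have ha := op_rmap op e hop a
    have hb := op_rmap op e hop b
    rw [h] at ha
    exact (hop (rmap op e hop b)).2.injective (ha.trans hb.symm)
  · intro b
    obtain ⟨a, ha⟩ := (hop b).2.surjective e
    refine ⟨a, (hop a).1.injective ?_⟩
    simpa [op_rmap op e hop a] using ha.symm

noncomputable def rEquiv : Fin n ≃ Fin n :=
  Equiv.ofBijective _ (rmap_bijective op e hop)

include hop in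
lemma rEquiv_apply (a : Fin n) : rEquiv op e hop a = rmap op e hop a := rfl

noncomputable def wEquiv : Fin n ≃ Fin n :=
  (Equiv.ofBijective (op e) (hop e).1).trans (rEquiv op e hop)

include hop in
lemma wEquiv_apply (a : Fin n) : wEquiv op e hop a = rmap op e hop (op e a) := rfl

include hop in
lemma op_op_wEquiv (a : Fin n) : op (op e a) (wEquiv op e hop a) = e := by
  rw [wEquiv_apply]; exact op_rmap op e hop (op e a)

lemma leftProd_concat (l : List (Fin n)) (hl : l ≠ []) (a : Fin n) :
    leftProd op e (l ++ [a]) = op (leftProd op e l) a := by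
  cases l with
  | nil => simp at hl
  | cons b l => simp [leftProd, List.foldl_append]

lemma ofFn_snoc {d : ℕ} (x : Fin d → Fin n) (a : Fin n) :
    List.ofFn (Fin.snoc x a) = List.ofFn x ++ [a] := by
  rw [List.ofFn_succ']
  simp [Function.comp_def]

lemma perk_pos_of_mem {d k : ℕ} {S : Set (Fin d → Fin n)}
    {K : Multiset (Fin d → Fin n)} (h : IsKMultiplex S k K) : 0 < Perk S k := by
  have hfin : {K : Multiset (Fin d → Fin n) | IsKMultiplex S k K}.Finite := by
    have h1 := Set.finite_range (fun s : Sym (Fin d → Fin n) (k * n) => (s : Multiset (Fin d → Fin n)))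
    refine h1.subset ?_
    rintro K ⟨hc, -⟩
    exact ⟨⟨K, hc⟩, rfl⟩
  rw [Perk, Set.ncard_pos hfin]
  exact ⟨K, h⟩


lemma card_filter_coe {α : Type*} (p : α → Prop) [DecidablePred p] (l : List α) :
    Multiset.card (Multiset.filter p ↑l) = l.countP fun a => decide (p a) := by
  rw [← Multiset.countP_eq_card_filter, Multiset.coe_countP]

lemma leftProd_pair (a b : Fin n) : leftProd op e [a, b] = op a b := rfl

include hop in
lemma base2 (k : ℕ) : ∃ K2 : Multiset (Fin 2 → Fin n), IsKMultiplex (SdSet op e 2) k K2 := by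
  classical
  let tup : Fin n → (Fin 2 → Fin n) := fun t => fun j => if j = 0 then t else rmap op e hop t
  refine ⟨↑((List.finRange n).flatMap fun t => List.replicate k (tup t)), ?_, ?_, ?_⟩
  · show Multiset.card _ = k * n
    rw [Multiset.coe_card]
    have h := countP_flatMap_replicate (fun _ => true) k tup (List.finRange n)
    simp only [List.countP_true] at h
    rw [h, List.length_finRange, mul_comm]
  · intro x hx
    rw [Multiset.mem_coe, List.mem_flatMap] at hx
    obtain ⟨t, -, hx⟩ := hx
    rw [List.eq_of_mem_replicate hx]
    show leftProd op e (List.ofFn (tup t)) = e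
    have : List.ofFn (tup t) = [t, rmap op e hop t] := by
      simp only [List.ofFn_succ, List.ofFn_zero, tup]
      norm_num
    rw [this, leftProd_pair op e]
    exact op_rmap op e hop t
  · intro j v
    rw [card_filter_coe, countP_flatMap_replicate]
    have h1 : ((List.finRange n).countP fun t => decide (tup t j = v)) = 1 := by
      fin_cases j
      · rw [List.countP_congr (q := fun t => decide (t = v)) ?_, countP_finRange_eq]
        intro a _
        simp [tup]
      · rw [List.countP_congr (q := fun t => decide (t = (rEquiv op e hop).symm v)) ?_,
          countP_finRange_eq]
        intro a _
        simp only [decide_eq_true_eq, tup]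
        have hj : (⟨1, by norm_num⟩ : Fin 2) ≠ 0 := by decide
        rw [if_neg hj]
        exact Iff.symm (Equiv.eq_symm_apply (rEquiv op e hop))
    rw [h1, one_mul]

include hop in
lemma step2 {d k : ℕ} (hd : 1 ≤ d) {K : Multiset (Fin d → Fin n)}
    (hK : IsKMultiplex (SdSet op e d) k K) :
    ∃ K' : Multiset (Fin (d + 2) → Fin n), IsKMultiplex (SdSet op e (d + 2)) k K' := by
  classical
  set w := wEquiv op e hop with hw
  let L := K.toList
  let V : List (Fin n) := (List.finRange n).flatMap fun t => List.replicate k t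
  have hLlen : L.length = k * n := by
    have hc : (↑L : Multiset (Fin d → Fin n)) = K := Multiset.coe_toList K
    rw [← Multiset.coe_card, hc]; exact hK.1
  have hVlen : V.length = n * k := by
    have h := countP_flatMap_replicate_id (fun _ => true) k (List.finRange n)
    simp only [List.countP_true] at h
    rw [show V = (List.finRange n).flatMap fun t => List.replicate k t from rfl, h,
      List.length_finRange]
  let ext : (Fin d → Fin n) × Fin n → (Fin (d + 2) → Fin n) :=
    fun p => Fin.snoc (Fin.snoc p.1 p.2) (w p.2)
  let P := L.zip V
  have hPlen : P.length = k * n := by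
    rw [List.length_zip, hLlen, hVlen, mul_comm n k, min_self]
  have hfst : P.map Prod.fst = L := List.map_fst_zip (by rw [hLlen, hVlen, mul_comm])
  have hsnd : P.map Prod.snd = V := List.map_snd_zip (by rw [hLlen, hVlen, mul_comm])
  refine ⟨↑(P.map ext), ?_, ?_, ?_⟩
  · rw [Multiset.coe_card, List.length_map, hPlen]
  · intro x hx
    rw [Multiset.mem_coe, List.mem_map] at hx
    obtain ⟨p, hp, rfl⟩ := hx
    have hp1 : p.1 ∈ K := by
      have h := (List.of_mem_zip hp).1
      rwa [← Multiset.mem_toList]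
    have hx1 : leftProd op e (List.ofFn p.1) = e := hK.2.1 _ hp1
    have hne : List.ofFn p.1 ≠ [] := by
      have : (List.ofFn p.1).length = d := List.length_ofFn
      intro hcon; rw [hcon] at this; simp at this; omega
    show leftProd op e (List.ofFn (ext p)) = e
    have hlist : List.ofFn (ext p) = (List.ofFn p.1 ++ [p.2]) ++ [w p.2] := by
      show List.ofFn (Fin.snoc (Fin.snoc p.1 p.2) (w p.2)) = _
      rw [ofFn_snoc, ofFn_snoc]
    have hne2 : List.ofFn p.1 ++ [p.2] ≠ [] := by
      intro hc; have := congrArg List.length hc; simp at this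
    rw [hlist, leftProd_concat op e _ hne2 _, leftProd_concat op e _ hne _, hx1]
    exact op_op_wEquiv op e hop p.2
  · intro j v
    rw [card_filter_coe, List.countP_map]
    induction j using Fin.lastCases with
    | last =>
        have hpt : ∀ p : (Fin d → Fin n) × Fin n,
            ((fun x => decide (x (Fin.last (d+1)) = v)) ∘ ext) p
              = decide (w p.2 = v) := by
          intro p
          simp [ext, Fin.snoc_last]
        rw [List.countP_congr (q := (fun b => decide (w b = v)) ∘ Prod.snd)
            (by intro a _; rw [hpt]; rfl)]
        rw [← List.countP_map, hsnd,
          show V = (List.finRange n).flatMap fun t => List.replicate k t from rfl,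
          countP_flatMap_replicate_id]
        have h1 : ((List.finRange n).countP fun t => decide (w t = v)) = 1 := by
          rw [List.countP_congr (q := fun t => decide (t = w.symm v)) ?_, countP_finRange_eq]
          intro a _
          simp only [decide_eq_true_eq]
          exact Iff.symm (Equiv.eq_symm_apply w)
        rw [h1, one_mul]
    | cast i =>
        induction i using Fin.lastCases with
        | last =>
            have hpt : ∀ p : (Fin d → Fin n) × Fin n,
                ((fun x => decide (x (Fin.castSucc (Fin.last d)) = v)) ∘ ext) p
                  = decide (p.2 = v) := by
              intro p
              simp [ext, Fin.snoc_castSucc, Fin.snoc_last]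
            rw [List.countP_congr (q := (fun b => decide (b = v)) ∘ Prod.snd)
                (by intro a _; rw [hpt]; rfl)]
            rw [← List.countP_map, hsnd,
              show V = (List.finRange n).flatMap fun t => List.replicate k t from rfl,
              countP_flatMap_replicate_id, countP_finRange_eq, one_mul]
        | cast i' =>
            have hpt : ∀ p : (Fin d → Fin n) × Fin n,
                ((fun x => decide (x (Fin.castSucc (Fin.castSucc i')) = v)) ∘ ext) p
                  = decide (p.1 i' = v) := by
              intro p
              simp [ext, Fin.snoc_castSucc]
            rw [List.countP_congr (q := (fun y => decide (y i' = v)) ∘ Prod.fst)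
                (by intro a _; rw [hpt]; rfl)]
            rw [← List.countP_map, hfst]
            have h := hK.2.2 i' v
            rw [← Multiset.coe_toList K, card_filter_coe] at h
            exact h

lemma exists_multiplex_of_perk_pos {d k : ℕ} {S : Set (Fin d → Fin n)}
    (h : 0 < Perk S k) : ∃ K, IsKMultiplex S k K :=
  Set.nonempty_of_ncard_ne_zero h.ne'

include hop in
lemma steps {k d0 : ℕ} (hd0 : 1 ≤ d0)
    (h : ∃ K, IsKMultiplex (SdSet op e d0) k K) :
    ∀ m, ∃ K, IsKMultiplex (SdSet op e (d0 + 2 * m)) k K := by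
  intro m
  induction m with
  | zero => simpa using h
  | succ m ih =>
      obtain ⟨K, hK⟩ := ih
      have h2 := step2 op e hop (show 1 ≤ d0 + 2 * m by omega) hK
      have heq : d0 + 2 * (m + 1) = d0 + 2 * m + 2 := by ring
      rw [heq]
      exact h2

end Quasigroup

end PerkAux

/-- For a binary quasigroup `op` of order `n` and `k ≥ 1`, if
`Per_k(S_{d'}(G)) > 0` for some odd `d' ≥ 1`, then `Per_k(S_d(G)) > 0` for all
`d ≥ d'`. -/
theorem perk_pos_of_odd_dim {n : ℕ} (op : Fin n → Fin n → Fin n) (e : Fin n)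
    (hop : ∀ a : Fin n, Function.Bijective (op a) ∧ Function.Bijective (fun x => op x a))
    (k : ℕ) (hk : 1 ≤ k)
    (d' : ℕ) (hd' : Odd d') (hd1 : 1 ≤ d')
    (hpos : 0 < Perk (SdSet op e d') k) :
    ∀ d : ℕ, d' ≤ d → 0 < Perk (SdSet op e d) k := by
  intro d hd
  obtain ⟨K0, hK0⟩ := PerkAux.exists_multiplex_of_perk_pos hpos
  obtain ⟨c, hc⟩ := hd'
  rcases Nat.even_or_odd d with he | ho
  · obtain ⟨c2, hc2⟩ := he
    obtain ⟨m, hm⟩ : ∃ m, d = 2 + 2 * m := ⟨(d - 2) / 2, by omega⟩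
    subst hm
    obtain ⟨K2, hK2⟩ := PerkAux.base2 op e hop k
    obtain ⟨K, hKm⟩ := PerkAux.steps op e hop (by omega) ⟨K2, hK2⟩ m
    exact PerkAux.perk_pos_of_mem hKm
  · obtain ⟨c1, hc1⟩ := ho
    obtain ⟨m, hm⟩ : ∃ m, d = d' + 2 * m := ⟨(d - d') / 2, by omega⟩
    subst hm
    obtain ⟨K, hKm⟩ := PerkAux.steps op e hop hd1 ⟨K0, hK0⟩ m
    exact PerkAux.perk_pos_of_mem hKm
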